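/- For every directed set P there exists a completely regular Hausdorff topological space Y such that P is Tukey equivalent to N_Δ, the set of all neighborhoods of the diagonal in Y × Y ordered by reverse inclusion. -/

import Mathlib

open Set Topology Cardinal

universe u

/-- A map `ψ : Q → P` is a Tukey map if the image of every unbounded set is unbounded. -/
def IsTukeyMap {Q P : Type*} [Preorder Q] [Preorder P] (ψ : Q → P) : Prop :=
  ∀ S : Set Q, ¬ BddAbove S → ¬ BddAbove (ψ '' S)

/-- `TukeyGE P Q` means `P ≥_T Q`: there is a Tukey map from `Q` to `P`. -/
def TukeyGE (P Q : Type*) [Preorder P] [Preorder Q] : Prop :=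
  ∃ ψ : Q → P, IsTukeyMap ψ

/-- Tukey equivalence of directed sets. -/
def TukeyEquiv (P Q : Type*) [Preorder P] [Preorder Q] : Prop :=
  TukeyGE P Q ∧ TukeyGE Q P

/-- The poset of all neighborhoods of the diagonal in `X × X`,
ordered by reverse inclusion. -/
abbrev DiagNbhdPoset (X : Type*) [TopologicalSpace X] :=
  ({U : Set (X × X) // U ∈ nhdsSet (Set.diagonal X)})ᵒᵈ

section Aux

variable {P : Type u} [Preorder P]

/-- The topology on `Option P` where all points `some p` are isolated and the
neighborhoods of `none` are generated by upper tails of `P`. -/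
def optTop (hP : ∀ S : Set P, S.Finite → BddAbove S) : TopologicalSpace (Option P) where
  IsOpen U := none ∈ U → ∃ p : P, ∀ q : P, p ≤ q → some q ∈ U
  isOpen_univ := fun _ => ⟨(hP ∅ Set.finite_empty).some, fun q _ => mem_univ _⟩
  isOpen_inter := by
    intro U V hUo hVo hn
    obtain ⟨p₁, hp₁⟩ := hUo hn.1
    obtain ⟨p₂, hp₂⟩ := hVo hn.2
    obtain ⟨b, hb⟩ := hP {p₁, p₂} ((Set.finite_singleton _).insert _)
    exact ⟨b, fun q hq =>
      ⟨hp₁ q (le_trans (hb (by simp)) hq), hp₂ q (le_trans (hb (by simp)) hq)⟩⟩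
  isOpen_sUnion := by
    intro S hS hn
    obtain ⟨U, hU, hnU⟩ := hn
    obtain ⟨p, hp⟩ := hS U hU hnU
    exact ⟨p, fun q hq => ⟨U, hU, hp q hq⟩⟩

variable (hP : ∀ S : Set P, S.Finite → BddAbove S)

/-- Basic neighborhood of `none`. -/
def optB (p : P) : Set (Option P) := insert none (some '' Ici p)

lemma mem_optB_none (p : P) : (none : Option P) ∈ optB p := Or.inl rfl

lemma mem_optB_some {p q : P} (h : p ≤ q) : (some q : Option P) ∈ optB p :=
  Or.inr ⟨q, h, rfl⟩

lemma some_mem_optB_iff {p q : P} : (some q : Option P) ∈ optB p ↔ p ≤ q := by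
  constructor
  · rintro (h | ⟨r, hr, hrq⟩)
    · exact absurd h (by simp)
    · rw [Option.some_inj] at hrq
      exact hrq ▸ hr
  · exact mem_optB_some

lemma optB_mono {p q : P} (h : p ≤ q) : optB q ⊆ optB p :=
  insert_subset_insert (image_mono (Ici_subset_Ici.2 h))

lemma optTop_isOpen_iff {U : Set (Option P)} :
    IsOpen[optTop hP] U ↔ (none ∈ U → ∃ p : P, ∀ q : P, p ≤ q → some q ∈ U) := Iff.rfl

lemma optB_isOpen (p : P) : IsOpen[optTop hP] (optB p) := by
  rw [optTop_isOpen_iff]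
  exact fun _ => ⟨p, fun q hq => mem_optB_some hq⟩

lemma opt_isOpen_singleton (q : P) : IsOpen[optTop hP] {some q} := by
  rw [optTop_isOpen_iff]
  intro h
  simp at h

lemma opt_mem_nhds_some {s : Set (Option P)} {q : P} :
    s ∈ @nhds _ (optTop hP) (some q) ↔ some q ∈ s := by
  letI := optTop hP
  constructor
  · exact fun h => mem_of_mem_nhds h
  · intro h
    rw [@mem_nhds_iff]
    exact ⟨{some q}, singleton_subset_iff.2 h, opt_isOpen_singleton hP q, rfl⟩

lemma opt_mem_nhds_none {s : Set (Option P)} :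
    s ∈ @nhds _ (optTop hP) none ↔ ∃ p : P, optB p ⊆ s := by
  letI := optTop hP
  constructor
  · intro h
    rw [@mem_nhds_iff] at h
    obtain ⟨t, hts, hto, hnt⟩ := h
    obtain ⟨p, hp⟩ := hto hnt
    refine ⟨p, fun y hy => ?_⟩
    rcases hy with hy | ⟨r, hr, rfl⟩
    · exact hts (hy ▸ hnt)
    · exact hts (hp r hr)
  · rintro ⟨p, hp⟩
    rw [@mem_nhds_iff]
    exact ⟨optB p, hp, optB_isOpen hP p, mem_optB_none p⟩

lemma opt_mem_nhdsSet_diag {U : Set (Option P × Option P)} :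
    U ∈ @nhdsSet _ (@instTopologicalSpaceProd _ _ (optTop hP) (optTop hP))
        (Set.diagonal (Option P)) ↔
      Set.diagonal (Option P) ⊆ U ∧ ∃ p : P, optB p ×ˢ optB p ⊆ U := by
  letI := optTop hP
  rw [mem_nhdsSet_iff_forall]
  constructor
  · intro h
    have hdiag : Set.diagonal (Option P) ⊆ U := fun x hx => mem_of_mem_nhds (h x hx)
    refine ⟨hdiag, ?_⟩
    have hn := h (none, none) rfl
    rw [mem_nhds_prod_iff] at hn
    obtain ⟨u, hu, v, hv, huv⟩ := hn
    obtain ⟨p₁, hp₁⟩ := (opt_mem_nhds_none hP).1 hu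
    obtain ⟨p₂, hp₂⟩ := (opt_mem_nhds_none hP).1 hv
    obtain ⟨b, hb⟩ := hP {p₁, p₂} ((Set.finite_singleton _).insert _)
    refine ⟨b, fun z hz => ?_⟩
    exact huv ⟨hp₁ (optB_mono (hb (by simp)) hz.1), hp₂ (optB_mono (hb (by simp)) hz.2)⟩
  · rintro ⟨hdiag, p, hp⟩ ⟨a, c⟩ hx
    obtain rfl : a = c := hx
    rw [mem_nhds_prod_iff]
    cases a with
    | none =>
        exact ⟨optB p, (opt_mem_nhds_none hP).2 ⟨p, subset_rfl⟩,
          optB p, (opt_mem_nhds_none hP).2 ⟨p, subset_rfl⟩, hp⟩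
    | some q =>
        refine ⟨{some q}, (opt_mem_nhds_some hP).2 rfl,
          {some q}, (opt_mem_nhds_some hP).2 rfl, ?_⟩
        rw [Set.singleton_prod_singleton, singleton_subset_iff]
        exact hdiag rfl

end Aux

/-- Every directed set is Tukey equivalent to the filter of neighborhoods of the
diagonal of some completely regular Hausdorff space. -/
theorem stmt4 {P : Type u} [Preorder P]
    (hP : ∀ S : Set P, S.Finite → BddAbove S) :
    ∃ (Y : Type u) (t : TopologicalSpace Y),
      letI := t
      CompletelyRegularSpace Y ∧ T2Space Y ∧ TukeyEquiv P (DiagNbhdPoset Y) := by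
  classical
  have hne : Nonempty P := (hP ∅ Set.finite_empty).elim fun b _ => ⟨b⟩
  by_cases hbd : BddAbove (univ : Set P)
  · -- `P` is bounded: use a one-point space.
    refine ⟨PUnit.{u+1}, ⊥, ?_, ?_, ?_⟩
    · letI : TopologicalSpace PUnit.{u+1} := ⊥
      haveI : DiscreteTopology PUnit.{u+1} := ⟨rfl⟩
      exact ⟨fun x K _ hxK => ⟨fun _ => 0, continuous_const, rfl,
        fun y hy => absurd (Subsingleton.elim y x ▸ hy) hxK⟩⟩
    · letI : TopologicalSpace PUnit.{u+1} := ⊥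
      haveI : DiscreteTopology PUnit.{u+1} := ⟨rfl⟩
      infer_instance
    · letI : TopologicalSpace PUnit.{u+1} := ⊥
      obtain ⟨b, hb⟩ := hbd
      have hPb : ∀ S : Set P, BddAbove S := fun S => ⟨b, fun s _ => hb (mem_univ s)⟩
      have hdiag_univ : Set.diagonal PUnit.{u+1} = Set.univ := by
        ext ⟨a, c⟩
        simp [Set.diagonal, Subsingleton.elim a c]
      have hQb : ∀ S : Set (DiagNbhdPoset PUnit.{u+1}), BddAbove S := by
        intro S
        refine ⟨OrderDual.toDual ⟨Set.diagonal PUnit.{u+1},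
          by rw [hdiag_univ]; exact Filter.univ_mem⟩, fun U _ => ?_⟩
        show Set.diagonal PUnit.{u+1} ⊆ (OrderDual.ofDual U).1
        exact fun z hz => subset_of_mem_nhdsSet (OrderDual.ofDual U).2 hz
      exact ⟨⟨fun _ => Classical.arbitrary P, fun S hS _ => hS (hQb S)⟩,
        ⟨fun _ => OrderDual.toDual ⟨univ, Filter.univ_mem⟩, fun S hS _ => hS (hPb S)⟩⟩
  · -- `P` is unbounded: use `Option P` with the tail topology.
    have hsep : ∀ q : P, ∃ p : P, ¬ p ≤ q := by
      intro q
      by_contra h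
      push_neg at h
      exact hbd ⟨q, fun r _ => h r⟩
    refine ⟨Option P, optTop hP, ?_, ?_, ?_⟩
    · -- completely regular
      letI := optTop hP
      refine ⟨fun x K hK hxK => ?_⟩
      -- find a clopen set `C` with `x ∈ C ⊆ Kᶜ`
      obtain ⟨C, hCo, hCc, hxC, hCK⟩ :
          ∃ C : Set (Option P), IsOpen C ∧ IsClosed C ∧ x ∈ C ∧ C ⊆ Kᶜ := by
        cases x with
        | none =>
            have : Kᶜ ∈ nhds (none : Option P) := hK.isOpen_compl.mem_nhds hxK
            obtain ⟨p, hp⟩ := (opt_mem_nhds_none hP).1 this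
            refine ⟨optB p, optB_isOpen hP p, ?_, mem_optB_none p, hp⟩
            exact ⟨fun (h : none ∈ (optB p)ᶜ) => absurd (mem_optB_none p) h⟩
        | some q =>
            obtain ⟨p, hpq⟩ := hsep q
            refine ⟨{some q}, opt_isOpen_singleton hP q, ?_, rfl, fun y hy => hy ▸ hxK⟩
            refine ⟨fun _ => ⟨p, fun r hr hc => hpq ?_⟩⟩
            rw [mem_singleton_iff, Option.some_inj] at hc
            exact hc ▸ hr
      refine ⟨fun y => if y ∈ C then 0 else 1, ?_, by simp [hxC], ?_⟩
      · refine Continuous.if ?_ continuous_const continuous_const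
        intro a ha
        have ha' : a ∈ frontier C := ha
        rw [IsClopen.frontier_eq ⟨hCc, hCo⟩] at ha'
        exact absurd ha' (notMem_empty a)
      · intro y hy
        have : y ∉ C := fun hc => hCK hc hy
        simp [this, Pi.one_apply]
    · -- T2
      letI := optTop hP
      refine { t2 := ?_ }
      intro a c hac
      cases a with
      | none =>
          cases c with
          | none => exact absurd rfl hac
          | some q =>
              obtain ⟨p, hpq⟩ := hsep q
              refine ⟨optB p, {some q}, optB_isOpen hP p, opt_isOpen_singleton hP q,
                mem_optB_none p, rfl, ?_⟩
              rw [disjoint_singleton_right]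
              exact fun hc => hpq (some_mem_optB_iff.1 hc)
      | some q =>
          cases c with
          | none =>
              obtain ⟨p, hpq⟩ := hsep q
              refine ⟨{some q}, optB p, opt_isOpen_singleton hP q, optB_isOpen hP p,
                rfl, mem_optB_none p, ?_⟩
              rw [disjoint_singleton_left]
              exact fun hc => hpq (some_mem_optB_iff.1 hc)
          | some q' =>
              refine ⟨{some q}, {some q'}, opt_isOpen_singleton hP q,
                opt_isOpen_singleton hP q', rfl, rfl, ?_⟩
              rw [disjoint_singleton]
              exact hac
    · -- Tukey equivalence
      letI := optTop hP
      -- the map P → DiagNbhdPoset (Option P)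
      have hmem : ∀ p : P, (Set.diagonal (Option P) ∪ optB p ×ˢ optB p) ∈
          nhdsSet (Set.diagonal (Option P)) := fun p =>
        (opt_mem_nhdsSet_diag hP).2 ⟨subset_union_left, p, subset_union_right⟩
      set φ : P → DiagNbhdPoset (Option P) :=
        fun p => OrderDual.toDual ⟨Set.diagonal (Option P) ∪ optB p ×ˢ optB p, hmem p⟩ with hφ
      -- the map DiagNbhdPoset (Option P) → P
      have hch : ∀ U : DiagNbhdPoset (Option P), ∃ p : P,
          optB p ×ˢ optB p ⊆ (OrderDual.ofDual U).1 :=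
        fun U => ((opt_mem_nhdsSet_diag hP).1 (OrderDual.ofDual U).2).2
      set ψ : DiagNbhdPoset (Option P) → P := fun U => (hch U).choose with hψ
      have hψ_spec : ∀ U : DiagNbhdPoset (Option P),
          optB (ψ U) ×ˢ optB (ψ U) ⊆ (OrderDual.ofDual U).1 := fun U => (hch U).choose_spec
      constructor
      · -- TukeyGE P (DiagNbhdPoset (Option P)) via ψ
        refine ⟨ψ, fun S hS hb => hS ?_⟩
        obtain ⟨b, hb⟩ := hb
        refine ⟨φ b, fun U hU => ?_⟩
        show (OrderDual.ofDual (φ b)).1 ⊆ (OrderDual.ofDual U).1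
        have hdU : Set.diagonal (Option P) ⊆ (OrderDual.ofDual U).1 :=
          ((opt_mem_nhdsSet_diag hP).1 (OrderDual.ofDual U).2).1
        have hle : ψ U ≤ b := hb ⟨U, hU, rfl⟩
        intro z hz
        rcases hz with hz | hz
        · exact hdU hz
        · exact hψ_spec U ⟨optB_mono hle hz.1, optB_mono hle hz.2⟩
      · -- TukeyGE (DiagNbhdPoset (Option P)) P via φ
        refine ⟨φ, fun S hS hb => hS ?_⟩
        obtain ⟨W, hW⟩ := hb
        obtain ⟨q, hq⟩ := ((opt_mem_nhdsSet_diag hP).1 (OrderDual.ofDual W).2).2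
        refine ⟨q, fun p hp => ?_⟩
        have hWp : (OrderDual.ofDual W).1 ⊆ (OrderDual.ofDual (φ p)).1 :=
          hW ⟨p, hp, rfl⟩
        have hz : ((none : Option P), (some q : Option P)) ∈ (OrderDual.ofDual W).1 :=
          hq ⟨mem_optB_none q, mem_optB_some le_rfl⟩
        rcases hWp hz with hz' | hz'
        · exact absurd hz' (by simp [Set.diagonal])
        · exact some_mem_optB_iff.1 hz'.2
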